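/- Let β = 1.96/(1 + √2). For every real number x ≥ 9, ln(1 + 1/x) − (β/x)·√(1 + 1/x) ≥ 0. -/

import Mathlib

theorem f_gr_nonneg (x : ℝ) (hx : x ≥ 9) :
    Real.log (1 + 1 / x) -
      (1.96 / (1 + Real.sqrt 2) / x) * Real.sqrt (1 + 1 / x) ≥ 0 := by
  have hx0 : (0:ℝ) < x := by linarith
  set t : ℝ := 1 / x with ht
  have ht0 : 0 < t := by positivity
  have ht9 : t ≤ 1 / 9 := by
    rw [ht, div_le_div_iff₀ hx0 (by norm_num)]; linarith
  have h1t : (0:ℝ) < 1 + t := by linarith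
  -- log (1+t) ≥ t/(1+t)
  have hlog : Real.log (1 + t) ≥ t / (1 + t) := by
    have h := Real.log_le_sub_one_of_pos (show (0:ℝ) < (1+t)⁻¹ by positivity)
    rw [Real.log_inv] at h
    have : (1+t)⁻¹ - 1 = -(t/(1+t)) := by field_simp; ring
    rw [this] at h
    linarith
  -- sqrt bounds
  have hs1 : Real.sqrt (1 + t) ≤ 1.06 := by
    nlinarith [Real.sq_sqrt (show (0:ℝ) ≤ 1 + t by linarith),
      Real.sqrt_nonneg (1 + t)]
  have hs1' : 0 ≤ Real.sqrt (1 + t) := Real.sqrt_nonneg _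
  have hs2 : Real.sqrt 2 ≥ 1.41 := by
    nlinarith [Real.sq_sqrt (show (0:ℝ) ≤ 2 by norm_num), Real.sqrt_nonneg 2]
  have hb0 : (0:ℝ) < 1 + Real.sqrt 2 := by linarith
  have hbeta : 1.96 / (1 + Real.sqrt 2) ≤ 1.96 / 2.41 := by
    apply div_le_div_of_nonneg_left (by norm_num) (by norm_num) (by linarith)
  have hbeta0 : 0 < 1.96 / (1 + Real.sqrt 2) := by positivity
  have hmul : 1.96 / (1 + Real.sqrt 2) / x * Real.sqrt (1 + t)
      ≤ (1.96 / 2.41) * t * 1.06 := by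
    have hx' : 1.96 / (1 + Real.sqrt 2) / x = 1.96 / (1 + Real.sqrt 2) * t := by
      rw [ht]; ring
    rw [hx']
    have h1 : 1.96 / (1 + Real.sqrt 2) * t ≤ 1.96 / 2.41 * t :=
      mul_le_mul_of_nonneg_right hbeta (le_of_lt ht0)
    nlinarith
  have hfin : (1.96 / 2.41) * t * 1.06 ≤ t / (1 + t) := by
    rw [le_div_iff₀ h1t]
    nlinarith
  linarith
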